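/- Let p, m be positive integers and for 0 ≤ k ≤ p define r(k) = (p!/(k!(p-k)!)) · k^k · (m+p-k)^{m+p-k} (with 0^0=1). Then for every integer k with 0 ≤ k < p-1, r(k+1)/r(k) ≤ exp(1/(2(m+p-k))). -/

import Mathlib

/-- `r k = (p choose k) * k^k * (m+p-k)^(m+p-k)` as a real number (with `0^0 = 1`). -/
noncomputable def rSeq (p m k : ℕ) : ℝ :=
  (Nat.choose p k : ℝ) * (k : ℝ) ^ k * ((m + p - k : ℕ) : ℝ) ^ (m + p - k)

/-- For positive integers `p, m` and `0 ≤ k < p - 1`,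
`r(k+1)/r(k) ≤ exp(1/(2(m+p-k)))`. -/
theorem stmt_3 (p m : ℕ) (hp : 0 < p) (hm : 0 < m) (k : ℕ) (hk : k < p - 1) :
    rSeq p m (k + 1) / rSeq p m k ≤ Real.exp (1 / (2 * ((m : ℝ) + p - k))) := by
  have hk2 : k + 2 ≤ p := by omega
  set N : ℕ := m + p - k with hNdef
  have hN3 : 3 ≤ N := by omega
  have hnext : m + p - (k + 1) = N - 1 := by omega
  set n : ℝ := (N : ℝ) with hn
  have hn3 : (3:ℝ) ≤ n := by rw [hn]; exact_mod_cast hN3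
  have hnpos : (0:ℝ) < n := by linarith
  have hcast1 : ((N - 1 : ℕ) : ℝ) = n - 1 := by
    have h1 : 1 ≤ N := by omega
    rw [hn]; push_cast [h1]; ring
  -- key : n - 1 ≤ n * exp(-1/n)
  have key : n - 1 ≤ n * Real.exp (-1 / n) := by
    have h := Real.add_one_le_exp (-1 / n)
    have h2 := mul_le_mul_of_nonneg_left h hnpos.le
    calc n - 1 = n * (-1 / n + 1) := by field_simp; ring
      _ ≤ n * Real.exp (-1 / n) := h2
  have hkpow : (0:ℝ) < (k : ℝ) ^ k := by
    rcases Nat.eq_zero_or_pos k with h | h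
    · simp [h]
    · have : (0:ℝ) < (k:ℝ) := by exact_mod_cast h
      positivity
  have hchoosepos : (0:ℝ) < (Nat.choose p k : ℝ) := by
    exact_mod_cast Nat.choose_pos (by omega)
  have hr0 : 0 < rSeq p m k := by
    unfold rSeq
    have h1 : (0:ℝ) < ((m + p - k : ℕ) : ℝ) ^ (m + p - k) := by
      have h2 : (0:ℝ) < ((m + p - k : ℕ) : ℝ) := by
        have : 0 < m + p - k := by omega
        exact_mod_cast this
      positivity
    positivity
  have hmain : rSeq p m (k + 1) ≤ rSeq p m k := by
    have h2 : rSeq p m k = (Nat.choose p k : ℝ) * (k : ℝ) ^ k * n ^ N := by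
      unfold rSeq; rw [← hNdef]
    have hchoose : (Nat.choose p (k+1) : ℝ) * ((k:ℝ) + 1) =
        (Nat.choose p k : ℝ) * ((p:ℝ) - k) := by
      have h := Nat.choose_succ_right_eq p k
      have hc := congrArg (Nat.cast : ℕ → ℝ) h
      push_cast [Nat.cast_sub (show k ≤ p by omega)] at hc
      linarith
    have h1 : rSeq p m (k+1) =
        (Nat.choose p k : ℝ) * ((p:ℝ) - k) * ((k:ℝ) + 1) ^ k * (n - 1) ^ (N - 1) := by
      unfold rSeq
      rw [hnext, hcast1]
      push_cast
      rw [pow_succ]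
      linear_combination ((k:ℝ) + 1) ^ k * (n - 1) ^ (N - 1) * hchoose
    rw [h1, h2]
    have hB : ((k:ℝ) + 1) ^ k ≤ Real.exp 1 * (k : ℝ) ^ k := by
      rcases Nat.eq_zero_or_pos k with h | h
      · simp [h]
      · have hkr : (0:ℝ) < (k:ℝ) := by exact_mod_cast h
        have h1k : (k:ℝ) + 1 ≤ (k:ℝ) * Real.exp (1 / k) := by
          have ha := Real.add_one_le_exp (1 / (k:ℝ))
          have hb := mul_le_mul_of_nonneg_left ha hkr.le
          calc (k:ℝ) + 1 = (k:ℝ) * (1 / k + 1) := by field_simp; ring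
            _ ≤ (k:ℝ) * Real.exp (1 / k) := hb
        calc ((k:ℝ) + 1) ^ k ≤ ((k:ℝ) * Real.exp (1 / k)) ^ k := by
              exact pow_le_pow_left₀ (by positivity) h1k k
          _ = (k:ℝ) ^ k * Real.exp 1 := by
              rw [mul_pow, ← Real.exp_nat_mul]
              congr 2
              field_simp
          _ = Real.exp 1 * (k:ℝ) ^ k := by ring
    have hn1 : (0:ℝ) ≤ n - 1 := by linarith
    have hC : (n - 1) ^ (N - 1) ≤ (n * Real.exp (-1 / n)) ^ (N - 1) :=
      pow_le_pow_left₀ hn1 key _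
    have hA : (p:ℝ) - k ≤ n - 1 := by
      have hb : (p:ℝ) ≤ ((N - 1 + k : ℕ) : ℝ) := by
        exact_mod_cast (show p ≤ N - 1 + k by omega)
      push_cast [Nat.cast_sub (show 1 ≤ N by omega)] at hb
      rw [hn]
      linarith
    have hpk0 : (0:ℝ) ≤ (p:ℝ) - k := by
      have : (k:ℝ) ≤ p := by exact_mod_cast (show k ≤ p by omega)
      linarith
    have hcn : (0:ℝ) ≤ (Nat.choose p k : ℝ) * (n - 1) := mul_nonneg hchoosepos.le hn1
    have hpow2 : (0:ℝ) ≤ (n - 1) ^ (N - 1) := by positivity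
    have step1 : (Nat.choose p k : ℝ) * ((p:ℝ) - k) * ((k:ℝ) + 1) ^ k * (n - 1) ^ (N - 1)
        ≤ (Nat.choose p k : ℝ) * (n - 1) * (Real.exp 1 * (k:ℝ) ^ k) *
          (n * Real.exp (-1 / n)) ^ (N - 1) := by
      gcongr <;> first | assumption | positivity
    refine step1.trans ?_
    have hexp : (n * Real.exp (-1 / n)) ^ (N - 1) =
        n ^ (N - 1) * Real.exp (-((N:ℝ) - 1) / n) := by
      rw [mul_pow, ← Real.exp_nat_mul]
      congr 2
      rw [hcast1, ← hn]
      ring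
    rw [hexp]
    have hfinal : (n - 1) * Real.exp 1 * Real.exp (-((N:ℝ) - 1) / n) ≤ n := by
      have hcomb : Real.exp 1 * Real.exp (-((N:ℝ) - 1) / n) = Real.exp (1 / n) := by
        rw [← Real.exp_add]
        congr 1
        rw [← hn]
        field_simp
        ring
      rw [mul_assoc, hcomb]
      have hmm := mul_le_mul_of_nonneg_right key (Real.exp_pos (1 / n)).le
      have h0 : -1 / n + 1 / n = 0 := by ring
      calc (n - 1) * Real.exp (1 / n) ≤ n * Real.exp (-1 / n) * Real.exp (1 / n) := hmm
        _ = n := by rw [mul_assoc, ← Real.exp_add, h0, Real.exp_zero, mul_one]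
    have hpowN : n ^ N = n ^ (N - 1) * n := by
      rw [← pow_succ]
      congr 1
      omega
    rw [hpowN]
    calc (Nat.choose p k : ℝ) * (n - 1) * (Real.exp 1 * (k:ℝ) ^ k) *
          (n ^ (N - 1) * Real.exp (-((N:ℝ) - 1) / n))
        = (Nat.choose p k : ℝ) * (k:ℝ) ^ k * n ^ (N - 1) *
          ((n - 1) * Real.exp 1 * Real.exp (-((N:ℝ) - 1) / n)) := by ring
      _ ≤ (Nat.choose p k : ℝ) * (k:ℝ) ^ k * n ^ (N - 1) * n := by gcongr
      _ = (Nat.choose p k : ℝ) * (k:ℝ) ^ k * (n ^ (N - 1) * n) := by ring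
  have hexp1 : (1:ℝ) ≤ Real.exp (1 / (2 * ((m : ℝ) + p - k))) := by
    apply Real.one_le_exp
    have hkp : (k:ℝ) < p := by exact_mod_cast (show k < p by omega)
    have hm0 : (0:ℝ) < m := by exact_mod_cast hm
    apply div_nonneg one_pos.le
    linarith
  calc rSeq p m (k + 1) / rSeq p m k ≤ 1 := (div_le_one hr0).mpr hmain
    _ ≤ _ := hexp1
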